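/- Let G be a split graph on vertices {1,…,n} with partition into a clique C and a stable set S, let ε ∈ {+1,−1}, and let A_1, …, A_t ⊆ C with t ≥ 1. Then, as subsets of the Hansen polytope H(G), ⋂_{i=1}^t [ε, A_i] = [ε, ⋂_{i=1}^t A_i] ∩ [ε, ⋃_{i=1}^t A_i]. In particular, every intersection of same-sign type-(1)-facets can be written using at most two type-(1)-facets of that sign. -/

import Mathlib

/-- A finset of vertices is stable (independent) in `G` if no two of its elements are adjacent. -/
def IsStable {n : ℕ} (G : SimpleGraph (Fin n)) (I : Finset (Fin n)) : Prop :=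
  ∀ ⦃a⦄, a ∈ I → ∀ ⦃b⦄, b ∈ I → ¬ G.Adj a b

/-- The point `e_0 + ∑_{i ∈ I} e_i ∈ ℝ^{n+1}`. -/
def hansenVert {n : ℕ} (I : Finset (Fin n)) : Fin (n + 1) → ℝ :=
  fun j => Fin.cases 1 (fun i => if i ∈ I then 1 else 0) j

/-- The Hansen polytope of `G`. -/
def hansenPolytope {n : ℕ} (G : SimpleGraph (Fin n)) : Set (Fin (n + 1) → ℝ) :=
  convexHull ℝ
    {x | ∃ I : Finset (Fin n), IsStable G I ∧ (x = hansenVert I ∨ x = -hansenVert I)}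

/-- The face `[ε, K] = { x ∈ H(G) : ε·(−x_0 + 2·∑_{i ∈ K} x_i) = 1 }` of the Hansen
polytope, for a sign `ε` and a clique `K`. -/
def hFace {n : ℕ} (G : SimpleGraph (Fin n)) (ε : ℝ) (K : Finset (Fin n)) :
    Set (Fin (n + 1) → ℝ) :=
  {x ∈ hansenPolytope G | ε * (-(x 0) + 2 * (∑ i ∈ K, x i.succ)) = 1}

/-- The linear functional defining the face `[ε, K]`. -/
def hF {n : ℕ} (ε : ℝ) (K : Finset (Fin n)) (x : Fin (n + 1) → ℝ) : ℝ :=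
  ε * (-(x 0) + 2 * (∑ i ∈ K, x i.succ))

lemma hF_linear {n : ℕ} (ε : ℝ) (K : Finset (Fin n)) : IsLinearMap ℝ (hF ε K) := by
  constructor
  · intro x y
    simp only [hF, Pi.add_apply, Finset.sum_add_distrib]
    ring
  · intro c x
    simp only [hF, Pi.smul_apply, smul_eq_mul]
    rw [show (∑ i ∈ K, c * x i.succ) = c * ∑ i ∈ K, x i.succ from (Finset.mul_sum K _ c).symm]
    ring

lemma hF_add {n : ℕ} (ε : ℝ) (K K' : Finset (Fin n)) (x : Fin (n + 1) → ℝ) :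
    hF ε K x + hF ε K' x = hF ε (K ∩ K') x + hF ε (K ∪ K') x := by
  simp only [hF]
  have h := Finset.sum_union_inter (s₁ := K) (s₂ := K') (f := fun i => x i.succ)
  linear_combination (-2 * ε) * h

lemma hF_valid {n : ℕ} (G : SimpleGraph (Fin n)) (C : Finset (Fin n))
    (hC : G.IsClique (↑C : Set (Fin n))) {K : Finset (Fin n)} (hK : K ⊆ C)
    {ε : ℝ} (hε : ε = 1 ∨ ε = -1) :
    ∀ x ∈ hansenPolytope G, hF ε K x ≤ 1 := by
  have hconv : Convex ℝ {x : Fin (n + 1) → ℝ | hF ε K x ≤ 1} :=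
    convex_halfSpace_le (hF_linear ε K) 1
  intro x hx
  refine convexHull_min ?_ hconv hx
  rintro y ⟨I, hI, hy⟩
  -- compute the sum over K of the vertex coordinates
  have hsum : (∑ i ∈ K, hansenVert I i.succ) = 0 ∨ (∑ i ∈ K, hansenVert I i.succ) = 1 := by
    have h1 : (∑ i ∈ K, hansenVert I i.succ) = (((K ∩ I).card : ℕ) : ℝ) := by
      simp [hansenVert]
    have hcard : (K ∩ I).card ≤ 1 := by
      refine Finset.card_le_one.mpr fun a ha b hb => ?_
      simp only [Finset.mem_inter] at ha hb
      by_contra hab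
      exact hI ha.2 hb.2 (hC (hK ha.1) (hK hb.1) hab)
    rcases Nat.le_one_iff_eq_zero_or_eq_one.mp hcard with h | h
    · left; rw [h1, h]; norm_num
    · right; rw [h1, h]; norm_num
  have h0 : hansenVert I 0 = 1 := rfl
  have hval : hF ε (K := K) (hansenVert I) = ε * (-1 + 2 * (∑ i ∈ K, hansenVert I i.succ)) := by
    rw [hF, h0]
  rcases hy with rfl | rfl
  · rcases hε with rfl | rfl <;> rcases hsum with h | h <;>
      simp only [Set.mem_setOf_eq, hval, h] <;> norm_num
  · have : hF ε (K := K) (-hansenVert I) = -hF ε (K := K) (hansenVert I) := by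
      simp only [hF, Pi.neg_apply, Finset.sum_neg_distrib]
      ring
    rcases hε with rfl | rfl <;> rcases hsum with h | h <;>
      simp only [Set.mem_setOf_eq, this, hval, h] <;> norm_num

/-- If two same-sign clique faces contain `x`, so do the faces of the intersection and
union of the cliques. -/
lemma hF_pair {n : ℕ} (G : SimpleGraph (Fin n)) (C : Finset (Fin n))
    (hC : G.IsClique (↑C : Set (Fin n))) {K K' : Finset (Fin n)} (hK : K ⊆ C) (hK' : K' ⊆ C)
    {ε : ℝ} (hε : ε = 1 ∨ ε = -1) {x : Fin (n + 1) → ℝ} (hx : x ∈ hansenPolytope G)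
    (h1 : hF ε K x = 1) (h2 : hF ε K' x = 1) :
    hF ε (K ∩ K') x = 1 ∧ hF ε (K ∪ K') x = 1 := by
  have hi := hF_valid G C hC (K := K ∩ K') ((Finset.inter_subset_left).trans hK) hε x hx
  have hu := hF_valid G C hC (K := K ∪ K') (Finset.union_subset hK hK') hε x hx
  have hadd := hF_add ε K K' x
  constructor <;> linarith

set_option maxHeartbeats 1000000 in
/-- Any intersection of same-sign type-(1)-facets `[ε, A_i]` (with `A_i ⊆ C`, `t ≥ 1`)
can be written using at most two of them:
`⋂_{i=1}^t [ε, A_i] = [ε, ⋂ A_i] ∩ [ε, ⋃ A_i]`. -/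
theorem hFace_iInter {n : ℕ} (G : SimpleGraph (Fin n))
    (C S : Finset (Fin n)) (hdisj : Disjoint C S) (hcover : C ∪ S = Finset.univ)
    (hC : G.IsClique (↑C : Set (Fin n))) (hS : IsStable G S)
    (t : ℕ) (ht : 1 ≤ t) (A : Fin t → Finset (Fin n)) (hA : ∀ i, A i ⊆ C)
    (ε : ℝ) (hε : ε = 1 ∨ ε = -1) :
    ⋂ i : Fin t, hFace G ε (A i) =
      hFace G ε (Finset.univ.inf A) ∩ hFace G ε (Finset.univ.sup A) := by
  have hFin : Nonempty (Fin t) := ⟨⟨0, ht⟩⟩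
  have hsupC : Finset.univ.sup A ⊆ C := Finset.sup_le fun i _ => hA i
  have hinfC : Finset.univ.inf A ⊆ C :=
    (Finset.inf_le (Finset.mem_univ (⟨0, ht⟩ : Fin t))).trans (hA _)
  ext x
  simp only [Set.mem_iInter, hFace, Set.mem_inter_iff, Set.mem_setOf_eq]
  constructor
  · intro h
    have hx : x ∈ hansenPolytope G := (h ⟨0, ht⟩).1
    have key : ∀ s : Finset (Fin t), s.Nonempty →
        hF ε (s.inf A) x = 1 ∧ hF ε (s.sup A) x = 1 := by
      intro s hs
      induction hs using Finset.Nonempty.cons_induction with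
      | singleton a =>
        simp only [Finset.inf_singleton, Finset.sup_singleton]
        exact ⟨(h a).2, (h a).2⟩
      | cons a s hmem hs ih =>
        obtain ⟨b, hb⟩ := hs
        have hinfSub : s.inf A ⊆ C := (Finset.inf_le hb).trans (hA b)
        have hsupSub : s.sup A ⊆ C := Finset.sup_le fun i _ => hA i
        rw [Finset.inf_cons, Finset.sup_cons]
        exact ⟨(hF_pair G C hC (hA a) hinfSub hε hx (h a).2 ih.1).1,
               (hF_pair G C hC (hA a) hsupSub hε hx (h a).2 ih.2).2⟩
    obtain ⟨h1, h2⟩ := key Finset.univ Finset.univ_nonempty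
    exact ⟨⟨hx, h1⟩, hx, h2⟩
  · rintro ⟨⟨hx, hinf⟩, -, hsup⟩ i
    refine ⟨hx, ?_⟩
    set K' : Finset (Fin n) := Finset.univ.inf A ∪ (Finset.univ.sup A \ A i) with hK'def
    have hinfS : Finset.univ.inf A ⊆ A i := Finset.inf_le (Finset.mem_univ i)
    have hsupS : A i ⊆ Finset.univ.sup A := Finset.le_sup (Finset.mem_univ i)
    have hK'C : K' ⊆ C :=
      Finset.union_subset hinfC ((Finset.sdiff_subset).trans hsupC)
    have hint : A i ∩ K' = Finset.univ.inf A := by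
      ext a
      simp only [hK'def, Finset.mem_inter, Finset.mem_union, Finset.mem_sdiff]
      have h1 : a ∈ Finset.univ.inf A → a ∈ A i := fun h => hinfS h
      tauto
    have hun : A i ∪ K' = Finset.univ.sup A := by
      ext a
      simp only [hK'def, Finset.mem_union, Finset.mem_sdiff]
      have h1 : a ∈ Finset.univ.inf A → a ∈ A i := fun h => hinfS h
      have h2 : a ∈ A i → a ∈ Finset.univ.sup A := fun h => hsupS h
      tauto
    have hadd := hF_add ε (A i) K' x
    rw [hint, hun] at hadd
    have hv1 := hF_valid G C hC (hA i) hε x hx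
    have hv2 := hF_valid G C hC hK'C hε x hx
    have : hF ε (A i) x = 1 := by
      simp only [hF] at hadd hv1 hv2 ⊢
      linarith
    exact this
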